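/- arXiv:2501.10806 — 5 statements merged into one kernel-verified Lean document; each statement's English description precedes it below -/
import Mathlib

section
/- Let H₀ : ℝ^{d1} → ℝ be ρ-strongly concave and L-smooth, A ∈ ℝ^{d2×d1} with full row rank, and let x*(λ) be the unique solution of ∇H₀(x) = A^T λ. Then the map λ ↦ −A x*(λ) is strongly monotone with constant ρ/(L‖(AA^T)^{-1}A‖)². -/
open scoped InnerProductSpace

theorem lagrangian_strongly_monotone
    {d1 d2 : ℕ}
    (H0 : EuclideanSpace ℝ (Fin d1) → ℝ)
    (ρ L : ℝ) (hρ : 0 < ρ) (hL : 0 < L)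
    (hconc : ∀ x1 x2, ρ * ‖x1 - x2‖ ^ 2 ≤ ⟪gradient H0 x2 - gradient H0 x1, x1 - x2⟫_ℝ)
    (hlip : ∀ x1 x2, ‖gradient H0 x1 - gradient H0 x2‖ ≤ L * ‖x1 - x2‖)
    (A : EuclideanSpace ℝ (Fin d1) →L[ℝ] EuclideanSpace ℝ (Fin d2))
    (hsurj : Function.Surjective A)
    (B : EuclideanSpace ℝ (Fin d1) →L[ℝ] EuclideanSpace ℝ (Fin d2))
    (hB : ∀ lam, B (ContinuousLinearMap.adjoint A lam) = lam)
    (xs : EuclideanSpace ℝ (Fin d2) → EuclideanSpace ℝ (Fin d1))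
    (hxs : ∀ lam, gradient H0 (xs lam) = ContinuousLinearMap.adjoint A lam) :
    ∀ lam1 lam2,
      (ρ / (L * ‖B‖) ^ 2) * ‖lam1 - lam2‖ ^ 2 ≤
        ⟪-(A (xs lam1)) + A (xs lam2), lam1 - lam2⟫_ℝ := by
  intro lam1 lam2
  set x1 := xs lam1
  set x2 := xs lam2
  have key : ⟪-(A x1) + A x2, lam1 - lam2⟫_ℝ
      = ⟪gradient H0 x2 - gradient H0 x1, x1 - x2⟫_ℝ := by
    rw [hxs, hxs, ← map_sub, ContinuousLinearMap.adjoint_inner_left,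
      real_inner_comm, map_sub, show -A x1 + A x2 = -(A x1 - A x2) by abel,
      show lam1 - lam2 = -(lam2 - lam1) by abel, inner_neg_neg]
  have hmain : ρ * ‖x1 - x2‖ ^ 2 ≤ ⟪-(A x1) + A x2, lam1 - lam2⟫_ℝ := by
    rw [key]; exact hconc x1 x2
  by_cases hBz : ‖B‖ = 0
  · -- B = 0 forces lam1 = lam2
    have hB0 : B = 0 := by simpa [norm_eq_zero] using hBz
    have h1 : lam1 = 0 := by rw [← hB lam1, hB0]; simp
    have h2 : lam2 = 0 := by rw [← hB lam2, hB0]; simp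
    have : lam1 - lam2 = 0 := by rw [h1, h2]; simp
    simp [this]
  · have hBpos : 0 < ‖B‖ := lt_of_le_of_ne (norm_nonneg _) (Ne.symm hBz)
    have hbound : ‖lam1 - lam2‖ ≤ L * ‖B‖ * ‖x1 - x2‖ := by
      have heq : lam1 - lam2 = B (gradient H0 x1 - gradient H0 x2) := by
        rw [hxs, hxs, map_sub, hB, hB]
      calc ‖lam1 - lam2‖ = ‖B (gradient H0 x1 - gradient H0 x2)‖ := by rw [heq]
        _ ≤ ‖B‖ * ‖gradient H0 x1 - gradient H0 x2‖ := B.le_opNorm _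
        _ ≤ ‖B‖ * (L * ‖x1 - x2‖) := by
            exact mul_le_mul_of_nonneg_left (hlip x1 x2) (norm_nonneg _)
        _ = L * ‖B‖ * ‖x1 - x2‖ := by ring
    have hLB : 0 < (L * ‖B‖) ^ 2 := by positivity
    have hsq : ‖lam1 - lam2‖ ^ 2 ≤ (L * ‖B‖) ^ 2 * ‖x1 - x2‖ ^ 2 := by
      have := mul_self_le_mul_self (norm_nonneg (lam1 - lam2)) hbound
      nlinarith [norm_nonneg (x1 - x2)]
    have : (ρ / (L * ‖B‖) ^ 2) * ‖lam1 - lam2‖ ^ 2 ≤ ρ * ‖x1 - x2‖ ^ 2 := by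
      rw [div_mul_eq_mul_div, div_le_iff₀ hLB]
      nlinarith
    linarith
end

section
/- Let H₀ : ℝ^{d1} → ℝ be ρ-strongly concave with Lipschitz gradient, X ⊆ ℝ^{d1} nonempty closed convex, A ∈ ℝ^{d2×d1}, and for each λ let x̂(λ) ∈ X be the unique point satisfying the variational characterization ⟨x − x̂(λ), ∇H₀(x̂(λ)) − A^T λ⟩ ≤ 0 for all x ∈ X. Then the map λ ↦ −A x̂(λ) is (ρ/‖A‖²)-co-coercive. -/
open scoped InnerProductSpace

theorem projected_lagrangian_cocoercive
    {d1 d2 : ℕ}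
    (H0 : EuclideanSpace ℝ (Fin d1) → ℝ)
    (ρ : ℝ) (hρ : 0 < ρ)
    (hconc : ∀ x1 x2, ρ * ‖x1 - x2‖ ^ 2 ≤ ⟪gradient H0 x2 - gradient H0 x1, x1 - x2⟫_ℝ)
    (X : Set (EuclideanSpace ℝ (Fin d1)))
    (hXne : X.Nonempty) (hXcl : IsClosed X) (hXcv : Convex ℝ X)
    (A : EuclideanSpace ℝ (Fin d1) →L[ℝ] EuclideanSpace ℝ (Fin d2))
    (xhat : EuclideanSpace ℝ (Fin d2) → EuclideanSpace ℝ (Fin d1))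
    (hmem : ∀ lam, xhat lam ∈ X)
    (hvi : ∀ lam, ∀ x ∈ X,
      ⟪x - xhat lam, gradient H0 (xhat lam) - ContinuousLinearMap.adjoint A lam⟫_ℝ ≤ 0) :
    ∀ lam1 lam2,
      (ρ / ‖A‖ ^ 2) * ‖A (xhat lam1) - A (xhat lam2)‖ ^ 2 ≤
        ⟪-(A (xhat lam1)) + A (xhat lam2), lam1 - lam2⟫_ℝ := by
  intro lam1 lam2
  set x1 := xhat lam1
  set x2 := xhat lam2
  have h1 := hvi lam1 x2 (hmem lam2)
  have h2 := hvi lam2 x1 (hmem lam1)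
  have hadj : ∀ lam : EuclideanSpace ℝ (Fin d2), ∀ y : EuclideanSpace ℝ (Fin d1),
      ⟪y, ContinuousLinearMap.adjoint A lam⟫_ℝ = ⟪A y, lam⟫_ℝ := by
    intro lam y
    rw [real_inner_comm, ContinuousLinearMap.adjoint_inner_left, real_inner_comm]
  have hsum : ρ * ‖x1 - x2‖ ^ 2 ≤ ⟪-(A x1) + A x2, lam1 - lam2⟫_ℝ := by
    have hc := hconc x1 x2
    have h1' : ⟪x2 - x1, gradient H0 x1⟫_ℝ - ⟪A (x2 - x1), lam1⟫_ℝ ≤ 0 := by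
      have := h1; rwa [inner_sub_right, hadj] at this
    have h2' : ⟪x1 - x2, gradient H0 x2⟫_ℝ - ⟪A (x1 - x2), lam2⟫_ℝ ≤ 0 := by
      have := h2; rwa [inner_sub_right, hadj] at this
    have e1 : ⟪x2 - x1, gradient H0 x1⟫_ℝ = -⟪gradient H0 x1, x1 - x2⟫_ℝ := by
      rw [show x2 - x1 = -(x1 - x2) from by abel, inner_neg_left, real_inner_comm]
    have e2 : ⟪x1 - x2, gradient H0 x2⟫_ℝ = ⟪gradient H0 x2, x1 - x2⟫_ℝ :=
      real_inner_comm _ _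
    have e3 : ⟪gradient H0 x2 - gradient H0 x1, x1 - x2⟫_ℝ
        = ⟪gradient H0 x2, x1 - x2⟫_ℝ - ⟪gradient H0 x1, x1 - x2⟫_ℝ :=
      inner_sub_left _ _ _
    have heq : ⟪A (x1 - x2), lam2⟫_ℝ + ⟪A (x2 - x1), lam1⟫_ℝ
        = ⟪-(A x1) + A x2, lam1 - lam2⟫_ℝ := by
      rw [map_sub, map_sub, inner_sub_left, inner_sub_left, inner_add_left,
        inner_neg_left, inner_sub_right, inner_sub_right]
      ring
    linarith
  rcases eq_or_ne ‖A‖ 0 with hA | hA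
  · have hA0 : A = 0 := norm_eq_zero.mp hA
    simp [hA0]
  · have hApos : 0 < ‖A‖ := lt_of_le_of_ne (norm_nonneg A) (Ne.symm hA)
    have hbound : ‖A x1 - A x2‖ ^ 2 ≤ ‖A‖ ^ 2 * ‖x1 - x2‖ ^ 2 := by
      have h := A.le_opNorm (x1 - x2)
      rw [map_sub] at h
      nlinarith [norm_nonneg (A x1 - A x2), norm_nonneg (x1 - x2), norm_nonneg A]
    calc (ρ / ‖A‖ ^ 2) * ‖A x1 - A x2‖ ^ 2
        ≤ (ρ / ‖A‖ ^ 2) * (‖A‖ ^ 2 * ‖x1 - x2‖ ^ 2) := by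
          apply mul_le_mul_of_nonneg_left hbound
          positivity
      _ = ρ * ‖x1 - x2‖ ^ 2 := by field_simp
      _ ≤ _ := hsum
end

section
/- Let p_i = h(z_i) − z_i where h is non-expansive and z_{i+1} = z_i + β_i(p_i + e_{i+1}) with 0 < β_i ≤ 1/2. Then ‖p_{i+1}‖² ≤ ‖p_i‖² + 2β_i‖e_{i+1}‖². -/
theorem km_residual_decrease
    {d : ℕ} (h : EuclideanSpace ℝ (Fin d) → EuclideanSpace ℝ (Fin d))
    (hne : ∀ a b, ‖h a - h b‖ ≤ ‖a - b‖)
    (z e : ℕ → EuclideanSpace ℝ (Fin d)) (β : ℕ → ℝ)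
    (hβ0 : ∀ i, 0 < β i) (hβ1 : ∀ i, β i ≤ 1 / 2)
    (hupd : ∀ i, z (i + 1) = z i + β i • (h (z i) - z i + e (i + 1))) :
    ∀ i, ‖h (z (i + 1)) - z (i + 1)‖ ^ 2 ≤
      ‖h (z i) - z i‖ ^ 2 + 2 * β i * ‖e (i + 1)‖ ^ 2 := by
  intro i
  have hb0 := hβ0 i
  have hb1 := hβ1 i
  set b := β i with hbdef
  set p := h (z i) - z i with hpdef
  set e1 := e (i + 1) with he1def
  have hz : z (i + 1) = z i + b • (p + e1) := hupd i
  have hu : ‖h (z (i + 1)) - h (z i)‖ ≤ b * ‖p + e1‖ := by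
    calc ‖h (z (i + 1)) - h (z i)‖ ≤ ‖z (i + 1) - z i‖ := hne _ _
      _ = b * ‖p + e1‖ := by
          rw [hz, add_sub_cancel_left, norm_smul, Real.norm_eq_abs, abs_of_pos hb0]
  have hdecomp : h (z (i + 1)) - z (i + 1)
      = (h (z (i + 1)) - h (z i)) + ((1 - b) • p - b • e1) := by
    rw [hz, hpdef]
    module
  have htri : ‖h (z (i + 1)) - z (i + 1)‖ ≤ b * ‖p + e1‖ + ‖(1 - b) • p - b • e1‖ := by
    rw [hdecomp]
    exact (norm_add_le _ _).trans (add_le_add_left hu _)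
  have h1 : ‖h (z (i + 1)) - z (i + 1)‖ ^ 2 ≤ (b * ‖p + e1‖ + ‖(1 - b) • p - b • e1‖) ^ 2 :=
    pow_le_pow_left₀ (norm_nonneg _) htri 2
  -- expansions
  have hA : ‖p + e1‖ ^ 2 = ‖p‖ ^ 2 + 2 * inner ℝ p e1 + ‖e1‖ ^ 2 := by
    rw [norm_add_sq_real]
  have hB : ‖(1 - b) • p - b • e1‖ ^ 2
      = (1 - b) ^ 2 * ‖p‖ ^ 2 - 2 * ((1 - b) * b) * inner ℝ p e1 + b ^ 2 * ‖e1‖ ^ 2 := by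
    rw [norm_sub_sq_real, norm_smul, norm_smul, real_inner_smul_left, real_inner_smul_right,
      Real.norm_eq_abs, Real.norm_eq_abs, abs_of_pos hb0,
      abs_of_pos (by linarith : (0:ℝ) < 1 - b)]
    ring
  set A := ‖p + e1‖ with hAdef
  set B := ‖(1 - b) • p - b • e1‖ with hBdef
  have hA0 : 0 ≤ A := norm_nonneg _
  have hB0 : 0 ≤ B := norm_nonneg _
  have hne0 : 0 ≤ ‖e1‖ ^ 2 := by positivity
  -- Young-type: (b*A + B)^2 ≤ b*A^2 + B^2/(1-b); combined with expansions via nlinarith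
  have key : (b * A + B) ^ 2 * (1 - b) ≤ b * (1 - b) * A ^ 2 + B ^ 2 := by
    nlinarith [sq_nonneg ((1 - b) * (b * A) - b * B), hb0, hb1]
  have hfin : (b * A + B) ^ 2 ≤ ‖p‖ ^ 2 + 2 * b * ‖e1‖ ^ 2 := by
    have h3 : 0 ≤ b * (1 - 2 * b) * ‖e1‖ ^ 2 :=
      mul_nonneg (mul_nonneg hb0.le (by linarith)) hne0
    have h2 : b * (1 - b) * A ^ 2 + B ^ 2 ≤ (1 - b) * (‖p‖ ^ 2 + 2 * b * ‖e1‖ ^ 2) := by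
      rw [hA, hB]; nlinarith [h3]
    exact le_of_mul_le_mul_right (by linarith [key, h2]) (by linarith : (0:ℝ) < 1 - b)
  linarith [h1, hfin]
end

section
/- Let α_k = α/(k+K)^a and β_k = β/(k+K)^b with 1/2 < a < b < 1, 2b ≥ 3a, and K ≥ 1. Then the double sum Σ_{i=0}^{k} β_i Σ_{j=i}^{k−1} β_j α_j is bounded above by a constant independent of k; specifically it is at most (2αβ²/(a+b−1)) · Σ_{i=0}^{∞} (i+1)^{−(4a−1)} < ∞. -/
open Finset

/-- Pointwise telescoping bound: for `x ≥ 1` and `1 < p ≤ 2`,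
`(p-1) * (x+1)^(-p) ≤ x^(1-p) - (x+1)^(1-p)`. -/
lemma ptwise_telescope (x p : ℝ) (hx : 1 ≤ x) (hp1 : 1 < p) (hp2 : p ≤ 2) :
    (p - 1) * (x + 1) ^ (-p) ≤ x ^ (1 - p) - (x + 1) ^ (1 - p) := by
  have hx0 : (0:ℝ) < x := lt_of_lt_of_le one_pos hx
  have hx1 : (0:ℝ) < x + 1 := by linarith
  set u : ℝ := 1 / (x + 1) with hu
  have hu0 : 0 < u := by positivity
  have hu2 : u ≤ 1 / 2 := by
    rw [hu]
    apply div_le_div_of_nonneg_left one_pos.le two_pos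
    linarith
  have hq0 : 0 ≤ p - 1 := by linarith
  have hq1 : p - 1 ≤ 1 := by linarith
  -- Bernoulli (concave version): (1 - u)^(p-1) ≤ 1 - (p-1)*u
  have hbern : (1 - u) ^ (p - 1) ≤ 1 - (p - 1) * u := by
    have := rpow_one_add_le_one_add_mul_self (s := -u) (by linarith : (-1:ℝ) ≤ -u) hq0 hq1
    calc (1 - u) ^ (p - 1) = (1 + -u) ^ (p - 1) := by ring_nf
      _ ≤ 1 + (p - 1) * -u := this
      _ = 1 - (p - 1) * u := by ring
  have hqu : (p - 1) * u ≤ 1 / 2 := by nlinarith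
  have h1mu : (0:ℝ) < 1 - u := by nlinarith
  have hpow_pos : (0:ℝ) < (1 - u) ^ (p - 1) := Real.rpow_pos_of_pos h1mu _
  -- hence 1 + (p-1)*u ≤ (1-u)^(1-p)
  have hkey : 1 + (p - 1) * u ≤ (1 - u) ^ (1 - p) := by
    rw [show (1 - p) = -(p - 1) by ring, Real.rpow_neg h1mu.le]
    rw [le_inv_comm₀ (by positivity) hpow_pos]
    calc (1 - u) ^ (p - 1) ≤ 1 - (p - 1) * u := hbern
      _ ≤ (1 + (p - 1) * u)⁻¹ := by
        rw [inv_eq_one_div, le_div_iff₀ (by positivity)]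
        nlinarith [sq_nonneg ((p - 1) * u)]
  -- multiply by (x+1)^(1-p)
  have hmul := mul_le_mul_of_nonneg_right hkey (Real.rpow_nonneg hx1.le (1 - p))
  have hrw1 : (1 - u) ^ (1 - p) * (x + 1) ^ (1 - p) = x ^ (1 - p) := by
    rw [show 1 - u = x / (x + 1) by rw [hu]; field_simp; ring,
      ← Real.mul_rpow (by positivity) hx1.le, div_mul_cancel₀ _ (ne_of_gt hx1)]
  have hrw2 : u * (x + 1) ^ (1 - p) = (x + 1) ^ (-p) := by
    rw [hu, one_div, ← Real.rpow_neg_one, ← Real.rpow_add hx1]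
    congr 1
    ring
  rw [hrw1] at hmul
  calc (p - 1) * (x + 1) ^ (-p) = (p - 1) * (u * (x + 1) ^ (1 - p)) := by rw [hrw2]
    _ ≤ x ^ (1 - p) - (x + 1) ^ (1 - p) := by nlinarith [Real.rpow_nonneg hx1.le (1 - p)]

/-- Telescoping tail bound. -/
lemma tail_bound (K p : ℝ) (hK : 1 ≤ K) (hp1 : 1 < p) (hp2 : p ≤ 2) (m : ℕ)
    (hm : 1 ≤ (m : ℝ) + K - 1) :
    ∀ k : ℕ, ∑ j ∈ Ico m k, ((j : ℝ) + K) ^ (-p) ≤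
      (((m : ℝ) + K - 1) ^ (1 - p) - ((max m k : ℝ) + K - 1) ^ (1 - p)) / (p - 1) := by
  have hppos : (0:ℝ) < p - 1 := by linarith
  intro k
  induction k with
  | zero =>
    rw [Ico_eq_empty_iff.2 (by omega), sum_empty, Nat.cast_zero,
      max_eq_left (Nat.cast_nonneg m)]
    simp
  | succ k ih =>
    rcases le_or_gt m k with h | h
    · rw [Finset.sum_Ico_succ_top h]
      have hmk : (m : ℝ) ≤ (k : ℝ) := Nat.cast_le.2 h
      have hxk : 1 ≤ (k : ℝ) + K - 1 := by linarith
      have hpt := ptwise_telescope ((k : ℝ) + K - 1) p hxk hp1 hp2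
      rw [show (k:ℝ) + K - 1 + 1 = (k:ℝ) + K by ring] at hpt
      rw [max_eq_right hmk] at ih
      have hmax1 : max (m:ℝ) ((k+1 : ℕ):ℝ) = (k:ℝ) + 1 := by
        rw [max_eq_right (by push_cast; linarith)]
        push_cast; ring
      rw [hmax1]
      have hterm : ((k:ℝ) + K) ^ (-p) ≤
          (((k:ℝ) + K - 1) ^ (1 - p) - ((k:ℝ) + 1 + K - 1) ^ (1 - p)) / (p - 1) := by
        rw [le_div_iff₀ hppos, show (k:ℝ) + 1 + K - 1 = (k:ℝ) + K by ring]
        nlinarith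
      calc ∑ j ∈ Ico m k, ((j : ℝ) + K) ^ (-p) + ((k:ℝ) + K) ^ (-p)
          ≤ (((m : ℝ) + K - 1) ^ (1 - p) - ((k : ℝ) + K - 1) ^ (1 - p)) / (p - 1)
            + (((k:ℝ) + K - 1) ^ (1 - p) - ((k:ℝ) + 1 + K - 1) ^ (1 - p)) / (p - 1) :=
            add_le_add ih hterm
        _ = (((m : ℝ) + K - 1) ^ (1 - p) - ((k : ℝ) + 1 + K - 1) ^ (1 - p)) / (p - 1) := by
            rw [← add_div]; ring_nf
    · rw [Ico_eq_empty_iff.2 (by omega), sum_empty,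
        max_eq_left (Nat.cast_le.2 (by omega))]
      simp

theorem double_sum_stepsize_bound
    (α β a b K : ℝ) (ha : 1 / 2 < a) (hab : a < b) (hb : b < 1)
    (h2b3a : 3 * a ≤ 2 * b) (hK : 1 ≤ K) (hα : 0 < α) (hβ : 0 < β)
    (αs βs : ℕ → ℝ)
    (hαs : ∀ i : ℕ, αs i = α / ((i : ℝ) + K) ^ a)
    (hβs : ∀ i : ℕ, βs i = β / ((i : ℝ) + K) ^ b) :
    ∀ k : ℕ, ∑ i ∈ range (k + 1), βs i * ∑ j ∈ Ico i k, βs j * αs j ≤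
      (2 * α * β ^ 2 / (a + b - 1)) * ∑' i : ℕ, ((i : ℝ) + 1) ^ (-(4 * a - 1)) := by
  intro k
  set p := a + b with hp
  have hp1 : 1 < p := by rw [hp]; linarith
  have hp2 : p ≤ 2 := by rw [hp]; linarith
  have hppos : (0:ℝ) < p - 1 := by linarith
  have hbase : ∀ i : ℕ, (1:ℝ) ≤ (i : ℝ) + K := by
    intro i
    have : (0:ℝ) ≤ i := Nat.cast_nonneg i
    linarith
  have hbasepos : ∀ i : ℕ, (0:ℝ) < (i : ℝ) + K := fun i => lt_of_lt_of_le one_pos (hbase i)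
  set C := 2 * α * β ^ 2 / (a + b - 1) with hC
  have hCpos : 0 < C := by
    rw [hC, hp] at *
    positivity
  -- pointwise bound on each outer summand
  have hterm : ∀ i : ℕ, βs i * ∑ j ∈ Ico i k, βs j * αs j ≤ C * ((i : ℝ) + 1) ^ (-(4 * a - 1)) := by
    intro i
    have hinner_eq : ∀ j : ℕ, βs j * αs j = α * β * ((j : ℝ) + K) ^ (-p) := by
      intro j
      rw [hαs, hβs, hp, div_mul_div_comm, ← Real.rpow_add (hbasepos j),
        Real.rpow_neg (hbasepos j).le, div_eq_mul_inv]
      ring_nf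
    have hβsi : βs i = β * ((i : ℝ) + K) ^ (-b) := by
      rw [hβs, Real.rpow_neg (hbasepos i).le, div_eq_mul_inv]
    -- bound the inner sum
    have hinner : ∑ j ∈ Ico i k, ((j : ℝ) + K) ^ (-p) ≤ 2 * ((i : ℝ) + K) ^ (1 - p) / (p - 1) := by
      rcases lt_or_ge i k with h | h
      · rw [Finset.sum_eq_sum_Ico_succ_bot h]
        have htail := tail_bound K p hK hp1 hp2 (i+1)
          (by push_cast; have : (0:ℝ) ≤ i := Nat.cast_nonneg i; linarith) k
        have htail' : ∑ j ∈ Ico (i+1) k, ((j : ℝ) + K) ^ (-p) ≤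
            ((i : ℝ) + K) ^ (1 - p) / (p - 1) := by
          refine le_trans htail ?_
          rw [div_le_div_iff_of_pos_right hppos, show ((i+1 : ℕ):ℝ) + K - 1 = (i:ℝ) + K by push_cast; ring]
          have hnn : (0:ℝ) ≤ max ((i+1:ℕ):ℝ) (k:ℝ) + K - 1 := by
            have h1 : ((i+1:ℕ):ℝ) ≤ max ((i+1:ℕ):ℝ) (k:ℝ) := le_max_left _ _
            have h2 : (0:ℝ) ≤ ((i+1:ℕ):ℝ) := Nat.cast_nonneg _
            linarith
          have := Real.rpow_nonneg hnn (1 - p)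
          linarith
        have hfirst : ((i:ℝ) + K) ^ (-p) ≤ ((i:ℝ) + K) ^ (1 - p) :=
          Real.rpow_le_rpow_of_exponent_le (hbase i) (by linarith)
        have hone : ((i:ℝ) + K) ^ (1 - p) ≤ ((i:ℝ) + K) ^ (1 - p) / (p - 1) := by
          rw [le_div_iff₀ hppos]
          nlinarith [Real.rpow_nonneg (hbasepos i).le (1 - p)]
        calc ((i:ℝ) + K) ^ (-p) + ∑ j ∈ Ico (i+1) k, ((j : ℝ) + K) ^ (-p)
            ≤ ((i:ℝ) + K) ^ (1 - p) / (p - 1) + ((i : ℝ) + K) ^ (1 - p) / (p - 1) :=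
              add_le_add (le_trans hfirst hone) htail'
          _ = 2 * ((i : ℝ) + K) ^ (1 - p) / (p - 1) := by ring
      · rw [Ico_eq_empty_iff.2 (by omega), sum_empty]
        positivity
    -- combine
    have hsum_eq : ∑ j ∈ Ico i k, βs j * αs j = α * β * ∑ j ∈ Ico i k, ((j : ℝ) + K) ^ (-p) := by
      rw [mul_sum]
      exact Finset.sum_congr rfl fun j _ => hinner_eq j
    rw [hsum_eq, hβsi]
    have hβnn : (0:ℝ) ≤ β * ((i : ℝ) + K) ^ (-b) := by positivity
    have step1 : β * ((i : ℝ) + K) ^ (-b) * (α * β * ∑ j ∈ Ico i k, ((j : ℝ) + K) ^ (-p)) ≤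
        β * ((i : ℝ) + K) ^ (-b) * (α * β * (2 * ((i : ℝ) + K) ^ (1 - p) / (p - 1))) := by
      apply mul_le_mul_of_nonneg_left _ hβnn
      apply mul_le_mul_of_nonneg_left hinner (by positivity)
    refine le_trans step1 ?_
    have hcomb : ((i : ℝ) + K) ^ (-b) * ((i : ℝ) + K) ^ (1 - p) = ((i:ℝ) + K) ^ (-(a + 2*b - 1)) := by
      rw [← Real.rpow_add (hbasepos i), hp]
      ring_nf
    have hi0 : (0:ℝ) ≤ (i:ℝ) := Nat.cast_nonneg i
    have hexp : ((i:ℝ) + K) ^ (-(a + 2*b - 1)) ≤ ((i : ℝ) + 1) ^ (-(4 * a - 1)) := by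
      have h1 : ((i:ℝ) + K) ^ (-(a + 2*b - 1)) ≤ ((i:ℝ) + 1) ^ (-(a + 2*b - 1)) :=
        Real.rpow_le_rpow_of_nonpos (by linarith) (by linarith) (by linarith)
      exact le_trans h1
        (Real.rpow_le_rpow_of_exponent_le (by linarith) (by linarith))
    calc β * ((i : ℝ) + K) ^ (-b) * (α * β * (2 * ((i : ℝ) + K) ^ (1 - p) / (p - 1)))
        = C * (((i : ℝ) + K) ^ (-b) * ((i : ℝ) + K) ^ (1 - p)) := by
          rw [hC, hp]; field_simp
      _ = C * ((i:ℝ) + K) ^ (-(a + 2*b - 1)) := by rw [hcomb]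
      _ ≤ C * ((i : ℝ) + 1) ^ (-(4 * a - 1)) := mul_le_mul_of_nonneg_left hexp hCpos.le
  -- summability
  have hsummable : Summable (fun i : ℕ => ((i : ℝ) + 1) ^ (-(4 * a - 1))) := by
    have h0 : Summable (fun n : ℕ => (n : ℝ) ^ (-(4 * a - 1))) := by
      rw [Real.summable_nat_rpow]
      linarith
    have := (summable_nat_add_iff 1).2 h0
    refine this.congr fun n => ?_
    push_cast
    ring_nf
  calc ∑ i ∈ range (k + 1), βs i * ∑ j ∈ Ico i k, βs j * αs j
      ≤ ∑ i ∈ range (k + 1), C * ((i : ℝ) + 1) ^ (-(4 * a - 1)) :=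
        Finset.sum_le_sum fun i _ => hterm i
    _ = C * ∑ i ∈ range (k + 1), ((i : ℝ) + 1) ^ (-(4 * a - 1)) := by rw [mul_sum]
    _ ≤ C * ∑' i : ℕ, ((i : ℝ) + 1) ^ (-(4 * a - 1)) := by
        apply mul_le_mul_of_nonneg_left _ hCpos.le
        exact Summable.sum_le_tsum _ (fun i _ => Real.rpow_nonneg (by positivity) _) hsummable
end

section
/- Let M'_i be a martingale difference sequence with E[‖M'_{i+1}‖² | F_i] ≤ D for a constant D, and define U_0 = 0, U_{k+1} = (1−β_k)U_k + β_k M'_{k+1}, where β_k = β/(k+K)^b with 0 < b < 1, β ≤ 1/2 and K ≥ (2b/β)^{1/(1−b)}. Then E[‖U_k‖²] ≤ 2D β_k for all k. -/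
open MeasureTheory

lemma params_aux {β b K x : ℝ} (hb0 : 0 < b) (hb1 : b < 1) (hβ0 : 0 < β) (hβ : β ≤ 1 / 2)
    (hK : K ≥ (2 * b / β) ^ ((1 : ℝ) / (1 - b))) (hx : x ≥ K) :
    0 < x ∧ β ≤ x ^ b ∧ 2 * b * x ^ b ≤ β * x := by
  set c : ℝ := 2 * b / β with hc
  have hc0 : 0 < c := by positivity
  have hA0 : 0 < (c) ^ ((1:ℝ) / (1 - b)) := Real.rpow_pos_of_pos hc0 _
  have hx0 : 0 < x := lt_of_lt_of_le hA0 (le_trans hK hx)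
  have h1b : 0 < 1 - b := by linarith
  have hx1b : c ≤ x ^ (1 - b) := by
    calc c = (c ^ ((1:ℝ)/(1-b))) ^ (1 - b) := by
          rw [← Real.rpow_mul hc0.le, one_div, inv_mul_cancel₀ h1b.ne', Real.rpow_one]
      _ ≤ x ^ (1 - b) := Real.rpow_le_rpow hA0.le (le_trans hK hx) h1b.le
  have hβxb : β ≤ x ^ b := by
    have hKx : (c ^ ((1:ℝ)/(1-b))) ^ b ≤ x ^ b :=
      Real.rpow_le_rpow hA0.le (le_trans hK hx) hb0.le
    have hcb : c ^ ((1:ℝ)/(1-b) * b) = (c ^ ((1:ℝ)/(1-b))) ^ b := Real.rpow_mul hc0.le _ _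
    have hlog : Real.log β ≤ (1/(1-b) * b) * Real.log c := by
      have hlog2b : b * Real.log (2*b) ≥ b - 1/2 := by
        have h := Real.log_le_sub_one_of_pos (show (0:ℝ) < 1/(2*b) by positivity)
        rw [Real.log_div one_ne_zero (by positivity)] at h
        simp only [Real.log_one] at h
        have h2 := mul_le_mul_of_nonneg_left h hb0.le
        have h3 : b * (1/(2*b)) = 1/2 := by field_simp
        nlinarith
      have hlogβ : Real.log β ≤ -1/2 := by
        calc Real.log β ≤ Real.log (1/2) := Real.log_le_log hβ0 hβ
          _ ≤ -1/2 := by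
            rw [show (1:ℝ)/2 = 2⁻¹ by norm_num, Real.log_inv]
            have := Real.log_two_gt_d9
            linarith
      have hkey : (1 - b) * Real.log β ≤ b * Real.log c := by
        have hlc : Real.log c = Real.log (2*b) - Real.log β := by
          rw [hc, Real.log_div (by positivity) (ne_of_gt hβ0)]
        nlinarith
      calc Real.log β = (1 - b) * Real.log β / (1 - b) := by field_simp
        _ ≤ b * Real.log c / (1 - b) := by gcongr
        _ = (1/(1-b) * b) * Real.log c := by ring
    calc β = Real.exp (Real.log β) := (Real.exp_log hβ0).symm
      _ ≤ Real.exp ((1/(1-b) * b) * Real.log c) := Real.exp_le_exp.mpr hlog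
      _ = Real.exp (Real.log c * ((1:ℝ)/(1-b) * b)) := by rw [mul_comm]
      _ = c ^ ((1:ℝ)/(1-b) * b) := (Real.rpow_def_of_pos hc0 _).symm
      _ = (c ^ ((1:ℝ)/(1-b))) ^ b := hcb
      _ ≤ x ^ b := hKx
  refine ⟨hx0, hβxb, ?_⟩
  have hsplit : x ^ (1 - b) * x ^ b = x := by
    rw [← Real.rpow_add hx0]; norm_num
  have hxb : (0:ℝ) < x ^ b := Real.rpow_pos_of_pos hx0 b
  have hmul := mul_le_mul_of_nonneg_right hx1b hxb.le
  rw [hsplit] at hmul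
  calc 2 * b * x ^ b = β * (c * x ^ b) := by rw [hc]; field_simp
    _ ≤ β * x := by nlinarith

lemma step_aux {β b x : ℝ} (hb0 : 0 < b) (hb1 : b < 1) (hβ0 : 0 < β)
    (hx : 0 < x) (hβ1 : β ≤ x ^ b) (h2b : 2 * b * x ^ b ≤ β * x) :
    2 * (β / x ^ b) - (β / x ^ b) ^ 2 ≤ 2 * (β / (x + 1) ^ b) := by
  have hxb : (0:ℝ) < x ^ b := Real.rpow_pos_of_pos hx b
  have hy : (0:ℝ) < (x + 1) ^ b := Real.rpow_pos_of_pos (by linarith) b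
  have hBer : (x + 1) ^ b * x ≤ x ^ b * (x + b) := by
    have h1 : (x + 1) ^ b = x ^ b * (1 + 1/x) ^ b := by
      rw [← Real.mul_rpow hx.le (by positivity)]
      congr 1
      field_simp
    have h2 : (1 + 1/x) ^ b ≤ 1 + b * (1/x) :=
      rpow_one_add_le_one_add_mul_self (by nlinarith [one_div_pos.mpr hx]) hb0.le hb1.le
    have h3 : x ^ b * ((1 + b * (1/x)) * x) = x ^ b * (x + b) := by
      field_simp
    calc (x + 1) ^ b * x = x ^ b * (1 + 1/x) ^ b * x := by rw [h1]
      _ ≤ x ^ b * (1 + b * (1/x)) * x := by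
          have := mul_le_mul_of_nonneg_left h2 hxb.le
          nlinarith
      _ = x ^ b * (x + b) := by rw [mul_assoc]; exact h3
  have key : (2 * β * x ^ b - β ^ 2) * (x + 1) ^ b ≤ 2 * β * (x ^ b) ^ 2 := by
    have hnn : 0 ≤ 2 * β * x ^ b - β ^ 2 := by nlinarith
    have h4 : (2 * β * x ^ b - β ^ 2) * ((x + 1) ^ b * x) ≤
        (2 * β * x ^ b - β ^ 2) * (x ^ b * (x + b)) :=
      mul_le_mul_of_nonneg_left hBer hnn
    nlinarith [mul_pos hxb hβ0, mul_pos hx hβ0, mul_pos hxb hxb]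
  have hl : 2 * (β / x ^ b) - (β / x ^ b) ^ 2 = (2 * β * x ^ b - β ^ 2) / (x ^ b) ^ 2 := by
    field_simp
  have hr : 2 * (β / (x + 1) ^ b) = (2 * β) / (x + 1) ^ b := by ring
  rw [hl, hr, div_le_div_iff₀ (by positivity) hy]
  linarith [key]

lemma coord_le_norm {d : ℕ} (x : EuclideanSpace ℝ (Fin d)) (i : Fin d) : |x i| ≤ ‖x‖ := by
  rw [EuclideanSpace.norm_eq]
  rw [show |x i| = Real.sqrt (|x i| ^ 2) from (Real.sqrt_sq (abs_nonneg _)).symm]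
  apply Real.sqrt_le_sqrt
  rw [sq_abs]
  have := Finset.single_le_sum (f := fun j => ‖x j‖ ^ 2)
    (fun j _ => sq_nonneg _) (Finset.mem_univ i)
  simpa [Real.norm_eq_abs, sq_abs] using this

lemma cross_zero {d : ℕ} {Ω : Type*} {m : MeasurableSpace Ω} {m0 : MeasurableSpace Ω}
    (μ : Measure Ω) [IsProbabilityMeasure μ] (hm : m ≤ m0)
    {f g : Ω → EuclideanSpace ℝ (Fin d)}
    (hfm : StronglyMeasurable[m] f)
    (hf2 : Integrable (fun ω => ‖f ω‖ ^ 2) μ)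
    (hgint : Integrable g μ)
    (hg2 : Integrable (fun ω => ‖g ω‖ ^ 2) μ)
    (hg0 : μ[g|m] =ᵐ[μ] fun _ => 0) :
    ∫ ω, (inner ℝ (f ω) (g ω) : ℝ) ∂μ = 0 := by
  have hgi_int : ∀ i : Fin d, Integrable (fun ω => g ω i) μ := fun i =>
    (EuclideanSpace.proj (𝕜 := ℝ) i).integrable_comp hgint
  have hfi_meas : ∀ i : Fin d, StronglyMeasurable[m] (fun ω => f ω i) := fun i =>
    (EuclideanSpace.proj (𝕜 := ℝ) i).continuous.comp_stronglyMeasurable hfm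
  have hgi0 : ∀ i : Fin d, μ[(fun ω => g ω i)|m] =ᵐ[μ] fun _ => (0:ℝ) := by
    intro i
    have h0m : AEStronglyMeasurable[m] (fun _ : Ω => (0:ℝ)) μ :=
      StronglyMeasurable.aestronglyMeasurable (@stronglyMeasurable_const Ω ℝ m _ 0)
    refine (ae_eq_condExp_of_forall_setIntegral_eq hm (hgi_int i)
      (fun s _ _ => (integrable_const (0:ℝ)).integrableOn)
      (fun s hs hμs => ?_) h0m).symm
    have h1' := ContinuousLinearMap.integral_comp_comm (EuclideanSpace.proj (𝕜 := ℝ) i)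
      (hgint.integrableOn (s := s))
    have h1 : ∫ x in s, g x i ∂μ = (EuclideanSpace.proj (𝕜 := ℝ) i) (∫ x in s, g x ∂μ) := h1'
    have h2 : ∫ x in s, g x ∂μ = 0 := by
      rw [← setIntegral_condExp hm hgint hs]
      exact integral_eq_zero_of_ae (ae_restrict_of_ae hg0)
    simp [h1, h2]
  have hprod_int : ∀ i : Fin d, Integrable (fun ω => f ω i * g ω i) μ := by
    intro i
    refine Integrable.mono' ((hf2.add hg2).div_const 2)
      (((hfi_meas i).mono hm).aestronglyMeasurable.mul (hgi_int i).aestronglyMeasurable) ?_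
    filter_upwards with ω
    have h1 := coord_le_norm (f ω) i
    have h2 := coord_le_norm (g ω) i
    have h3 : ‖f ω i * g ω i‖ = |f ω i| * |g ω i| := by
      rw [Real.norm_eq_abs, abs_mul]
    simp only [Pi.add_apply]
    rw [h3]
    nlinarith [abs_nonneg (f ω i), abs_nonneg (g ω i), norm_nonneg (f ω), norm_nonneg (g ω),
      sq_nonneg (‖f ω‖ - ‖g ω‖), mul_le_mul h1 h2 (abs_nonneg _) (norm_nonneg _)]
  have hzero : ∀ i : Fin d, ∫ ω, f ω i * g ω i ∂μ = 0 := by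
    intro i
    have hmul := condExp_mul_of_stronglyMeasurable_left (hfi_meas i) (hprod_int i) (hgi_int i)
    have hce : μ[(fun ω => f ω i) * (fun ω => g ω i)|m] =ᵐ[μ] fun _ => (0:ℝ) := by
      refine hmul.trans ?_
      filter_upwards [hgi0 i] with ω h
      simp only [Pi.mul_apply, h]
      simp
    have hic := integral_condExp (f := (fun ω => f ω i) * (fun ω => g ω i)) hm (μ := μ)
    show ∫ x, ((fun ω => f ω i) * fun ω => g ω i) x ∂μ = 0
    rw [← hic, integral_congr_ae hce]
    simp
  have hrw : (fun ω => (inner ℝ (f ω) (g ω) : ℝ)) = fun ω => ∑ i, f ω i * g ω i := by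
    funext ω
    simp [PiLp.inner_apply, RCLike.inner_apply, mul_comm]
  rw [hrw, integral_finset_sum _ (fun i _ => hprod_int i)]
  simp [hzero]

theorem averaged_noise_bound
    {d : ℕ} {Ω : Type*} {m0 : MeasurableSpace Ω} (μ : Measure Ω)
    [IsProbabilityMeasure μ] (ℱ : Filtration ℕ m0)
    (M' : ℕ → Ω → EuclideanSpace ℝ (Fin d))
    (hadapt : ∀ k, StronglyMeasurable[ℱ (k + 1)] (M' (k + 1)))
    (hint : ∀ k, Integrable (M' (k + 1)) μ)
    (hsq : ∀ k, Integrable (fun ω => ‖M' (k + 1) ω‖ ^ 2) μ)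
    (hmd : ∀ k, μ[M' (k + 1) | ℱ k] =ᵐ[μ] fun _ => 0)
    (D : ℝ)
    (hvar : ∀ k, ∀ᵐ ω ∂μ, (μ[fun ω' => ‖M' (k + 1) ω'‖ ^ 2 | ℱ k]) ω ≤ D)
    (β b K : ℝ) (hb0 : 0 < b) (hb1 : b < 1) (hβ0 : 0 < β) (hβ : β ≤ 1 / 2)
    (hK : K ≥ (2 * b / β) ^ ((1 : ℝ) / (1 - b)))
    (βs : ℕ → ℝ) (hβs : ∀ k : ℕ, βs k = β / ((k : ℝ) + K) ^ b)
    (U : ℕ → Ω → EuclideanSpace ℝ (Fin d))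
    (hU0 : U 0 = 0)
    (hUrec : ∀ k, U (k + 1) = fun ω => (1 - βs k) • U k ω + βs k • M' (k + 1) ω) :
    ∀ k, ∫ ω, ‖U k ω‖ ^ 2 ∂μ ≤ 2 * D * βs k := by
  have hEM : ∀ k, ∫ ω, ‖M' (k + 1) ω‖ ^ 2 ∂μ ≤ D := by
    intro k
    rw [← integral_condExp (ℱ.le k) (f := fun ω => ‖M' (k + 1) ω‖ ^ 2)]
    calc ∫ ω, (μ[fun ω' => ‖M' (k + 1) ω'‖ ^ 2|ℱ k]) ω ∂μ ≤ ∫ _, D ∂μ :=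
          integral_mono_ae integrable_condExp (integrable_const D) (hvar k)
      _ = D := by simp
  have hD0 : 0 ≤ D := le_trans (integral_nonneg fun ω => sq_nonneg _) (hEM 0)
  have hparams : ∀ k : ℕ, 0 < (k : ℝ) + K ∧ β ≤ ((k : ℝ) + K) ^ b ∧
      2 * b * ((k : ℝ) + K) ^ b ≤ β * ((k : ℝ) + K) := fun k =>
    params_aux hb0 hb1 hβ0 hβ hK (by linarith [Nat.cast_nonneg (α := ℝ) k])
  have hβk_pos : ∀ k, 0 < βs k := fun k => by
    rw [hβs]; exact div_pos hβ0 (Real.rpow_pos_of_pos (hparams k).1 b)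
  have hβk1 : ∀ k, βs k ≤ 1 := fun k => by
    rw [hβs]
    exact div_le_one_of_le₀ (hparams k).2.1 (Real.rpow_pos_of_pos (hparams k).1 b).le
  have hstep : ∀ k, 2 * βs k - βs k ^ 2 ≤ 2 * βs (k + 1) := by
    intro k
    have h := step_aux hb0 hb1 hβ0 (hparams k).1 (hparams k).2.1 (hparams k).2.2
    have hx1 : ((k + 1 : ℕ) : ℝ) + K = ((k : ℝ) + K) + 1 := by push_cast; ring
    rw [hβs k, hβs (k + 1), hx1]
    simpa using h
  have main : ∀ k, StronglyMeasurable[ℱ k] (U k) ∧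
      Integrable (fun ω => ‖U k ω‖ ^ 2) μ ∧ ∫ ω, ‖U k ω‖ ^ 2 ∂μ ≤ 2 * D * βs k := by
    intro k
    induction k with
    | zero =>
      refine ⟨?_, ?_, ?_⟩
      · rw [hU0]; exact @stronglyMeasurable_zero _ _ (ℱ 0) _ _
      · rw [hU0]; simpa using integrable_const (0 : ℝ)
      · have hz : ∫ ω, ‖U 0 ω‖ ^ 2 ∂μ = 0 := by
          rw [hU0]; simp
        rw [hz]
        exact mul_nonneg (by linarith) (hβk_pos 0).le
    | succ k ih =>
      obtain ⟨hmeas, hint2, hbound⟩ := ih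
      have hm := ℱ.le k
      refine ⟨?_, ?_⟩
      · rw [hUrec]
        exact ((hmeas.mono (ℱ.mono (Nat.le_succ k))).const_smul (1 - βs k)).add
          ((hadapt k).const_smul (βs k))
      have hexp : ∀ ω, ‖U (k + 1) ω‖ ^ 2 =
          ((1 - βs k) ^ 2 * ‖U k ω‖ ^ 2 +
            (2 * (1 - βs k) * βs k) * (inner ℝ (U k ω) (M' (k + 1) ω) : ℝ)) +
          (βs k) ^ 2 * ‖M' (k + 1) ω‖ ^ 2 := by
        intro ω
        simp only [hUrec]
        rw [norm_add_sq_real, norm_smul, norm_smul, real_inner_smul_left, real_inner_smul_right]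
        simp only [Real.norm_eq_abs, mul_pow, sq_abs]
        ring
      have hcross_int : Integrable (fun ω => (inner ℝ (U k ω) (M' (k + 1) ω) : ℝ)) μ := by
        refine Integrable.mono' ((hint2.add (hsq k)).div_const 2)
          (AEStronglyMeasurable.inner (hmeas.mono hm).aestronglyMeasurable
            (hint k).aestronglyMeasurable) ?_
        filter_upwards with ω
        have h := norm_inner_le_norm (𝕜 := ℝ) (U k ω) (M' (k + 1) ω)
        have h2 := sq_nonneg (‖U k ω‖ - ‖M' (k + 1) ω‖)
        simp only [Pi.add_apply]
        nlinarith [norm_nonneg (U k ω), norm_nonneg (M' (k + 1) ω)]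
      have hi1 : Integrable (fun ω => (1 - βs k) ^ 2 * ‖U k ω‖ ^ 2) μ := hint2.const_mul _
      have hi2 : Integrable (fun ω =>
          (2 * (1 - βs k) * βs k) * (inner ℝ (U k ω) (M' (k + 1) ω) : ℝ)) μ :=
        hcross_int.const_mul _
      have hi3 : Integrable (fun ω => (βs k) ^ 2 * ‖M' (k + 1) ω‖ ^ 2) μ := (hsq k).const_mul _
      have hfun : (fun ω => ‖U (k + 1) ω‖ ^ 2) = fun ω =>
          ((1 - βs k) ^ 2 * ‖U k ω‖ ^ 2 +
            (2 * (1 - βs k) * βs k) * (inner ℝ (U k ω) (M' (k + 1) ω) : ℝ)) +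
          (βs k) ^ 2 * ‖M' (k + 1) ω‖ ^ 2 := funext hexp
      have hint2' : Integrable (fun ω => ‖U (k + 1) ω‖ ^ 2) μ := by
        rw [hfun]; exact (hi1.add hi2).add hi3
      refine ⟨hint2', ?_⟩
      have hczero : ∫ ω, (inner ℝ (U k ω) (M' (k + 1) ω) : ℝ) ∂μ = 0 :=
        cross_zero μ hm hmeas hint2 (hint k) (hsq k) (hmd k)
      have hI : ∫ ω, ‖U (k + 1) ω‖ ^ 2 ∂μ =
          (1 - βs k) ^ 2 * ∫ ω, ‖U k ω‖ ^ 2 ∂μ +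
          (βs k) ^ 2 * ∫ ω, ‖M' (k + 1) ω‖ ^ 2 ∂μ := by
        have hi12 : Integrable (fun ω =>
            (1 - βs k) ^ 2 * ‖U k ω‖ ^ 2 +
              (2 * (1 - βs k) * βs k) * (inner ℝ (U k ω) (M' (k + 1) ω) : ℝ)) μ := hi1.add hi2
        rw [hfun, integral_add hi12 hi3, integral_add hi1 hi2,
          integral_const_mul, integral_const_mul, integral_const_mul, hczero]
        ring
      rw [hI]
      have h1 : (1 - βs k) ^ 2 * ∫ ω, ‖U k ω‖ ^ 2 ∂μ ≤ (1 - βs k) ^ 2 * (2 * D * βs k) :=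
        mul_le_mul_of_nonneg_left hbound (sq_nonneg _)
      have h2 : (βs k) ^ 2 * ∫ ω, ‖M' (k + 1) ω‖ ^ 2 ∂μ ≤ (βs k) ^ 2 * D :=
        mul_le_mul_of_nonneg_left (hEM k) (sq_nonneg _)
      have h3 : (1 - βs k) ^ 2 * (2 * D * βs k) + (βs k) ^ 2 * D ≤ 2 * D * βs (k + 1) := by
        have hs := hstep k
        have ht1 := hβk1 k
        have ht0 := hβk_pos k
        nlinarith [mul_le_mul_of_nonneg_left hs hD0,
          mul_nonneg hD0 (mul_nonneg (sq_nonneg (βs k)) (by linarith : (0:ℝ) ≤ 1 - βs k))]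
      linarith
  exact fun k => (main k).2.2
end
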